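/- Let k and d be positive integers and write d = σ·2^{k-1} − Σ_{i=1}^{k-1} ε_i·2^{i-1} with σ a nonnegative integer and each ε_i ∈ {0,1}. Then the Griesmer bound g(k,d) = Σ_{i=0}^{k-1} ⌈d/2^i⌉ equals σ·(2^k − 1) − Σ_{i=1}^{k-1} ε_i·(2^i − 1). -/

import Mathlib

/-- The ambient vector space `F_2^r`. -/
abbrev Vec (r : ℕ) := Fin r → ZMod 2

/-- A line of `PG(r-1,2)`: a 2-dimensional subspace of `F_2^r`. -/
def isLine {r : ℕ} (L : Submodule (ZMod 2) (Vec r)) : Prop :=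
  Module.finrank (ZMod 2) L = 2

/-- A point of `PG(r-1,2)`: a 1-dimensional subspace of `F_2^r`. -/
def isPoint {r : ℕ} (P : Submodule (ZMod 2) (Vec r)) : Prop :=
  Module.finrank (ZMod 2) P = 1

/-- A hyperplane of `PG(r-1,2)`: an `(r-1)`-dimensional subspace of `F_2^r`. -/
def isHyperplane {r : ℕ} (H : Submodule (ZMod 2) (Vec r)) : Prop :=
  Module.finrank (ZMod 2) H = r - 1

open scoped Classical in
/-- The number of members of the multiset `S` (of lines) contained in the subspace `H`. -/
noncomputable def linesIn {r : ℕ} (S : Multiset (Submodule (ZMod 2) (Vec r)))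
    (H : Submodule (ZMod 2) (Vec r)) : ℕ :=
  Multiset.card (S.filter (fun L => L ≤ H))

/-- An `(n,r,s)` system: a multiset of `n` lines of `PG(r-1,2)` such that every hyperplane
contains at most `s` of them and some hyperplane contains exactly `s` of them. -/
def IsSystem (r n s : ℕ) (S : Multiset (Submodule (ZMod 2) (Vec r))) : Prop :=
  Multiset.card S = n ∧ (∀ L ∈ S, isLine L) ∧
    (∀ H, isHyperplane H → linesIn S H ≤ s) ∧
    (∃ H, isHyperplane H ∧ linesIn S H = s)

/-- The Griesmer bound `g(k,d) = ∑_{i=0}^{k-1} ⌈d/2^i⌉` for binary linear codes. -/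
def griesmer (k d : ℕ) : ℕ := ∑ i ∈ Finset.range k, (d + 2 ^ i - 1) / 2 ^ i


lemma geom2 (n : ℕ) : ∑ i ∈ Finset.range n, 2 ^ i = 2 ^ n - 1 := by
  induction n with
  | zero => simp
  | succ n ih =>
    rw [Finset.sum_range_succ, ih]
    have : 1 ≤ 2 ^ n := Nat.one_le_two_pow
    have : 2 ^ (n+1) = 2 * 2 ^ n := by ring
    omega

lemma step (k d : ℕ) (hd : 0 < d) (σ : ℕ) (ε : ℕ → ℕ) (hε : ∀ i, ε i ≤ 1)
    (hrep : d + ∑ j ∈ Finset.Icc 1 (k - 1), ε j * 2 ^ (j - 1) = σ * 2 ^ (k - 1))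
    (i : ℕ) (hi : i < k) :
    (d + 2 ^ i - 1) / 2 ^ i + ∑ j ∈ Finset.Icc (i+1) (k-1), ε j * 2 ^ (j - 1 - i)
      = σ * 2 ^ (k - 1 - i) := by
  set B := ∑ j ∈ Finset.Icc 1 i, ε j * 2 ^ (j - 1) with hBdef
  set T := ∑ j ∈ Finset.Icc (i+1) (k-1), ε j * 2 ^ (j - 1 - i) with hTdef
  set S := σ * 2 ^ (k - 1 - i) with hSdef
  have hik : i ≤ k - 1 := by omega
  have hsplit : (∑ j ∈ Finset.Icc 1 (k-1), ε j * 2 ^ (j-1)) = B + 2 ^ i * T := by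
    have h2 : 2 ^ i * T = ∑ j ∈ Finset.Icc (i+1) (k-1), ε j * 2 ^ (j - 1) := by
      rw [hTdef, Finset.mul_sum]
      apply Finset.sum_congr rfl
      intro j hj
      have hj1 : i + 1 ≤ j := (Finset.mem_Icc.mp hj).1
      have : i + (j - 1 - i) = j - 1 := by omega
      calc 2 ^ i * (ε j * 2 ^ (j - 1 - i)) = ε j * (2 ^ i * 2 ^ (j - 1 - i)) := by ring
        _ = ε j * 2 ^ (j - 1) := by rw [← pow_add, this]
    rw [h2, hBdef, show Finset.Icc 1 i = Finset.Ioc 0 i from Finset.Icc_add_one_left_eq_Ioc 0 i,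
      show Finset.Icc (i+1) (k-1) = Finset.Ioc i (k-1) from Finset.Icc_add_one_left_eq_Ioc i (k-1),
      show Finset.Icc 1 (k-1) = Finset.Ioc 0 (k-1) from Finset.Icc_add_one_left_eq_Ioc 0 (k-1),
      ← Finset.sum_Ioc_consecutive _ (Nat.zero_le i) hik]
  have hS2 : σ * 2 ^ (k - 1) = 2 ^ i * S := by
    have h : i + (k - 1 - i) = k - 1 := by omega
    calc σ * 2 ^ (k-1) = σ * 2 ^ (i + (k-1-i)) := by rw [h]
      _ = 2 ^ i * S := by rw [hSdef, pow_add]; ring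
  have heq : d + B + 2 ^ i * T = 2 ^ i * S := by
    rw [← hS2, ← hrep, hsplit]; ring
  have hTS : T < S := by
    have h1 : 2 ^ i * T < 2 ^ i * S := by omega
    exact Nat.lt_of_mul_lt_mul_left h1
  set M := S - T with hMdef
  have key : 2 ^ i * M + 2 ^ i * T = 2 ^ i * S := by
    rw [← Nat.mul_add, hMdef, Nat.sub_add_cancel hTS.le]
  have hdB : d + B = 2 ^ i * M := Nat.add_right_cancel (heq.trans key.symm)
  have hB1 : B ≤ 2 ^ i - 1 := by
    have h1 : B ≤ ∑ j ∈ Finset.Icc 1 i, 2 ^ (j - 1) := by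
      apply Finset.sum_le_sum
      intro j _
      calc ε j * 2 ^ (j-1) ≤ 1 * 2 ^ (j-1) := Nat.mul_le_mul_right _ (hε j)
        _ = 2 ^ (j-1) := one_mul _
    have h2 : ∑ j ∈ Finset.Icc 1 i, 2 ^ (j - 1) = 2 ^ i - 1 := by
      rw [← Finset.Ico_add_one_right_eq_Icc, Finset.sum_Ico_eq_sum_range]
      rw [show i + 1 - 1 = i from rfl]
      exact (Finset.sum_congr rfl (fun m _ => by congr 1; omega)).trans (geom2 i)
    omega
  have harith : d + 2 ^ i - 1 = (2 ^ i - 1 - B) + 2 ^ i * M := by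
    have h1 : 1 ≤ 2 ^ i := Nat.one_le_two_pow
    rw [← hdB]
    clear heq key hrep hdB
    omega
  have hdiv : (d + 2 ^ i - 1) / 2 ^ i = M := by
    rw [harith, Nat.add_mul_div_left _ _ (pow_pos (by norm_num) i),
      Nat.div_eq_of_lt (by omega), zero_add]
  rw [hdiv, hMdef, Nat.sub_add_cancel hTS.le]

/-- If `d = σ·2^{k-1} - ∑_{i=1}^{k-1} ε_i·2^{i-1}` with `σ ∈ ℕ` and `ε_i ∈ {0,1}`, then
`g(k,d) = σ·(2^k - 1) - ∑_{i=1}^{k-1} ε_i·(2^i - 1)` (stated additively over `ℕ`). -/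
theorem griesmer_explicit (k d : ℕ) (hk : 0 < k) (hd : 0 < d)
    (σ : ℕ) (ε : ℕ → ℕ) (hε : ∀ i, ε i ≤ 1)
    (hrep : d + ∑ i ∈ Finset.Icc 1 (k - 1), ε i * 2 ^ (i - 1) = σ * 2 ^ (k - 1)) :
    griesmer k d + ∑ i ∈ Finset.Icc 1 (k - 1), ε i * (2 ^ i - 1) = σ * (2 ^ k - 1) := by
  unfold griesmer
  have hsum : ∑ i ∈ Finset.range k,
      ((d + 2 ^ i - 1) / 2 ^ i + ∑ j ∈ Finset.Icc (i+1) (k-1), ε j * 2 ^ (j - 1 - i))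
      = ∑ i ∈ Finset.range k, σ * 2 ^ (k - 1 - i) :=
    Finset.sum_congr rfl fun i hi => step k d hd σ ε hε hrep i (Finset.mem_range.mp hi)
  rw [Finset.sum_add_distrib] at hsum
  have hswap : (∑ i ∈ Finset.range k, ∑ j ∈ Finset.Icc (i+1) (k-1), ε j * 2 ^ (j - 1 - i))
      = ∑ j ∈ Finset.Icc 1 (k-1), ε j * (2 ^ j - 1) := by
    rw [Finset.sum_comm' (s' := fun j => Finset.range j) (t' := Finset.Icc 1 (k-1))
      (fun i j => by simp only [Finset.mem_range, Finset.mem_Icc]; omega)]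
    apply Finset.sum_congr rfl
    intro j hj
    rw [← Finset.mul_sum, Finset.sum_range_reflect (fun m => 2 ^ m) j, geom2]
  have hrhs : (∑ i ∈ Finset.range k, σ * 2 ^ (k - 1 - i)) = σ * (2 ^ k - 1) := by
    rw [← Finset.mul_sum]
    congr 1
    have := Finset.sum_range_reflect (fun m => 2 ^ m) k
    calc ∑ i ∈ Finset.range k, 2 ^ (k - 1 - i) = ∑ i ∈ Finset.range k, 2 ^ i := by
          rw [this]
      _ = 2 ^ k - 1 := geom2 k
  rw [hswap, hrhs] at hsum
  exact hsum
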